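/- Let F be a field of characteristic zero, t ∈ F with t - 1 not an integer, and let r ∈ F(x) be a rational function having a pole of order n ≥ 1 at 0. Then the rational function r' + ((t-1-x)/x)·r also has a pole of order n at 0. -/

import Mathlib

open Polynomial

/-- If `t - 1` is not an integer and `r ∈ F(x)` has a pole of order `n ≥ 1` at `0`
(i.e. `0` is a root of multiplicity `n` of the reduced denominator of `r`), then
`r' + ((t-1-x)/x)·r` also has a pole at `0` (its reduced denominator vanishes at `0`). -/
theorem pole_at_zero_of_first_order_operator
    (F : Type*) [Field F] [CharZero F]
    (δ : Derivation F (RatFunc F) (RatFunc F)) (hδ : δ RatFunc.X = 1)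
    (t : F) (ht : ∀ m : ℤ, (m : F) ≠ t - 1)
    (r : RatFunc F) (n : ℕ) (hn : 1 ≤ n)
    (hpole : (r.denom).rootMultiplicity 0 = n) :
    ((δ r + ((RatFunc.C (t - 1) - RatFunc.X) / RatFunc.X) * r).denom).eval 0 = 0 := by
  classical
  set A := algebraMap F[X] (RatFunc F) with hA
  -- derivation acts as derivative on polynomials
  have hDmap : ∀ f : F[X], δ (A f) = A (derivative f) := by
    have haev : ∀ g : F[X], Polynomial.aeval RatFunc.X g = A g := by
      intro g
      have h : (Polynomial.aeval RatFunc.X : F[X] →ₐ[F] RatFunc F)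
          = IsScalarTower.toAlgHom F F[X] (RatFunc F) := by
        apply Polynomial.algHom_ext
        simp [RatFunc.algebraMap_X]
      rw [h]; rfl
    intro f
    have h2 := δ.comp_aeval_eq RatFunc.X f
    rw [hδ, smul_eq_mul, mul_one, haev, haev] at h2
    exact h2
  set p := r.num with hp
  set q := r.denom with hq
  have hq0 : q ≠ 0 := r.denom_ne_zero
  have hAq : A q ≠ 0 := RatFunc.algebraMap_ne_zero hq0
  have hAX : A Polynomial.X ≠ 0 := RatFunc.algebraMap_ne_zero Polynomial.X_ne_zero
  have hr : A p / A q = r := r.num_div_denom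
  have h1 : r * A q = A p := by rw [← hr]; field_simp
  have h2 : A (derivative p) = r * A (derivative q) + A q * δ r := by
    rw [← hDmap, ← h1, Derivation.leibniz, hDmap, smul_eq_mul, smul_eq_mul]
  set N : F[X] := Polynomial.X * derivative p * q - Polynomial.X * p * derivative q
      + (Polynomial.C (t - 1) - Polynomial.X) * p * q with hN
  set s : RatFunc F := δ r + ((RatFunc.C (t - 1) - RatFunc.X) / RatFunc.X) * r with hs
  have key : s * (A Polynomial.X * A q ^ 2) = A N := by
    have hδr : δ r = (A (derivative p) - r * A (derivative q)) / A q := by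
      rw [h2]; field_simp; ring
    rw [hs, hδr, ← hr, hN,
      show (RatFunc.X : RatFunc F) = A Polynomial.X from (RatFunc.algebraMap_X (K := F)).symm,
      show RatFunc.C (t - 1) = A (Polynomial.C (t - 1)) from (RatFunc.algebraMap_C _).symm]
    simp only [map_mul, map_sub, map_add, map_pow]
    field_simp
  -- cross multiply with reduced form of s
  have hsd0 : A s.denom ≠ 0 := RatFunc.algebraMap_ne_zero s.denom_ne_zero
  have hpoly : s.num * (Polynomial.X * q ^ 2) = N * s.denom := by
    have hk := key
    rw [← s.num_div_denom, div_mul_eq_mul_div, div_eq_iff hsd0] at hk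
    apply RatFunc.algebraMap_injective F
    rw [map_mul, map_mul, map_mul, map_pow]
    exact hk
  -- factor q = X^n * u
  set u : F[X]  := q /ₘ (Polynomial.X - Polynomial.C 0) ^ n with hu
  have hfac : (Polynomial.X : F[X]) ^ n * u = q := by
    have := q.pow_mul_divByMonic_rootMultiplicity_eq 0
    rw [hpole] at this
    simpa [hu] using this
  have hu0 : u.eval 0 ≠ 0 := by
    have := eval_divByMonic_pow_rootMultiplicity_ne_zero 0 hq0
    rw [hpole] at this
    simpa [hu] using this
  have hq00 : q.eval 0 = 0 := by
    have : 0 < q.rootMultiplicity 0 := by omega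
    exact (Polynomial.rootMultiplicity_pos hq0).mp this
  have hp0 : p.eval 0 ≠ 0 := by
    obtain ⟨a, b, hab⟩ := r.isCoprime_num_denom
    intro hpz
    have := congrArg (Polynomial.eval 0) hab
    simp [hpz, hq00, ← hp, ← hq] at this
  obtain ⟨m, rfl⟩ : ∃ m, n = m + 1 := ⟨n - 1, by omega⟩
  set M : F[X] := Polynomial.X * derivative p * u
      - (Polynomial.C ((m : F) + 1) * p * u + Polynomial.X * p * derivative u)
      + (Polynomial.C (t - 1) - Polynomial.X) * p * u with hM
  have hNM : N = Polynomial.X ^ (m + 1) * M := by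
    rw [hN, hM, ← hfac, derivative_mul, derivative_X_pow]
    push_cast
    ring
  have hM0 : M.eval 0 ≠ 0 := by
    rw [hM]
    simp only [eval_add, eval_sub, eval_mul, eval_C, eval_X, eval_pow]
    simp only [zero_mul, mul_zero, zero_sub, zero_add, sub_zero]
    intro h
    have hcoef : (t - 1 - ((m : F) + 1)) * (p.eval 0 * u.eval 0) = 0 := by
      linear_combination h
    rcases mul_eq_zero.mp hcoef with h' | h'
    · refine ht ((m : ℤ) + 1) ?_
      push_cast
      linear_combination -h'
    · exact mul_ne_zero hp0 hu0 h'
  have hMne : M ≠ 0 := fun h => hM0 (by simp [h])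
  have hNne : N ≠ 0 := by
    rw [hNM]
    exact mul_ne_zero (pow_ne_zero _ Polynomial.X_ne_zero) hMne
  -- root multiplicity of N at 0 is at most m+1
  have hrmN : N.rootMultiplicity 0 ≤ m + 1 := by
    rw [Polynomial.rootMultiplicity_le_iff hNne]
    simp only [Polynomial.C_0, sub_zero]
    intro hdvd
    rw [hNM, pow_succ] at hdvd
    have hXdM : (Polynomial.X : F[X]) ∣ M :=
      (mul_dvd_mul_iff_left (pow_ne_zero (m+1) (Polynomial.X_ne_zero (R := F)))).mp hdvd
    have : M.eval 0 = 0 := by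
      obtain ⟨c, hc⟩ := hXdM
      simp [hc]
    exact hM0 this
  -- now derive contradiction
  by_contra h0
  have hsdrm : s.denom.rootMultiplicity 0 = 0 :=
    Polynomial.rootMultiplicity_eq_zero h0
  have hnum0 : s.num ≠ 0 := by
    intro h
    rw [h, zero_mul] at hpoly
    exact hNne (by
      rcases mul_eq_zero.mp hpoly.symm with h' | h'
      · exact h'
      · exact absurd h' s.denom_ne_zero)
  have hLne : s.num * (Polynomial.X * q ^ 2) ≠ 0 :=
    mul_ne_zero hnum0 (mul_ne_zero Polynomial.X_ne_zero (pow_ne_zero _ hq0))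
  have hge : m + 2 ≤ (s.num * (Polynomial.X * q ^ 2)).rootMultiplicity 0 := by
    rw [Polynomial.le_rootMultiplicity_iff hLne]
    simp only [Polynomial.C_0, sub_zero]
    refine Dvd.dvd.mul_left ?_ s.num
    rw [← hfac]
    calc (Polynomial.X : F[X]) ^ (m + 2) ∣ Polynomial.X ^ (2 * (m + 1) + 1) :=
          pow_dvd_pow _ (by omega)
      _ ∣ Polynomial.X * (Polynomial.X ^ (m + 1) * u) ^ 2 := ⟨u ^ 2, by ring⟩
  have hle : (N * s.denom).rootMultiplicity 0 ≤ m + 1 := by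
    rw [Polynomial.rootMultiplicity_mul (mul_ne_zero hNne s.denom_ne_zero), hsdrm]
    omega
  rw [hpoly] at hge
  omega
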